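/- Let Φ be a trace-preserving positive linear map on density matrices whose outputs on pure states have rank at most n. Then the minimum output entropy satisfies S_min(Φ) ≤ log(n)·√(n/(n-1))·min over unit vectors ψ of √(1 - Tr(Φ(|ψ⟩⟨ψ|)²)). -/

import Mathlib

open ComplexOrder

/-- Von Neumann entropy of a matrix (via eigenvalues when hermitian). -/
noncomputable def vnEntropy {M : ℕ} (σ : Matrix (Fin M) (Fin M) ℂ) : ℝ :=
  if h : σ.IsHermitian then ∑ i, (-(h.eigenvalues i) * Real.log (h.eigenvalues i))
  else 0

section Aux
open Real Set

noncomputable def fent (p : ℝ) : ℝ := p * Real.log p ^ 2 / (1 - p)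
noncomputable def fder (p : ℝ) : ℝ :=
  (Real.log p ^ 2 + 2 * Real.log p * (1 - p)) / (1 - p) ^ 2

lemma hasDerivAt_fent {p : ℝ} (h0 : 0 < p) (h1 : p < 1) : HasDerivAt fent (fder p) p := by
  have hp : p ≠ 0 := h0.ne'
  have hp1 : (1 : ℝ) - p ≠ 0 := by linarith
  have hlog : HasDerivAt Real.log p⁻¹ p := Real.hasDerivAt_log hp
  have hl2 : HasDerivAt (fun x => Real.log x ^ 2) (2 * Real.log p ^ 1 * p⁻¹) p := hlog.pow 2
  have hu : HasDerivAt (fun x : ℝ => x * Real.log x ^ 2)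
      (1 * Real.log p ^ 2 + p * (2 * Real.log p ^ 1 * p⁻¹)) p := (hasDerivAt_id' p).mul hl2
  have hv : HasDerivAt (fun x : ℝ => 1 - x) (-1) p := (hasDerivAt_id p).const_sub 1
  have := hu.div hv hp1
  convert this using 1
  iterate 3 rfl
  unfold fder
  field_simp
  ring

lemma hasDerivAt_fder {p : ℝ} (h0 : 0 < p) (h1 : p < 1) :
    HasDerivAt fder
      (2 * (Real.log p + 1 - p) * (Real.log p + (1 - p) / p) / (1 - p) ^ 3) p := by
  have hp : p ≠ 0 := h0.ne'
  have hp1 : (1 : ℝ) - p ≠ 0 := by linarith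
  have hlog : HasDerivAt Real.log p⁻¹ p := Real.hasDerivAt_log hp
  have hl2 : HasDerivAt (fun x => Real.log x ^ 2) (2 * Real.log p ^ 1 * p⁻¹) p := hlog.pow 2
  have hv : HasDerivAt (fun x : ℝ => 1 - x) (-1) p := (hasDerivAt_id p).const_sub 1
  have hw : HasDerivAt (fun x : ℝ => Real.log x ^ 2 + 2 * Real.log x * (1 - x))
      (2 * Real.log p ^ 1 * p⁻¹ + ((2 * p⁻¹) * (1 - p) + (2 * Real.log p) * (-1))) p :=
    hl2.add ((hlog.const_mul 2).mul hv)
  have hz : HasDerivAt (fun x : ℝ => (1 - x) ^ 2) (2 * (1 - p) ^ 1 * (-1)) p := hv.pow 2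
  have hz' : (1 - p) ^ 2 ≠ 0 := pow_ne_zero _ hp1
  have := hw.div hz hz'
  convert this using 1
  iterate 3 rfl
  field_simp
  ring

lemma fder_anti : AntitoneOn fder (Ioo (0:ℝ) 1) := by
  have hint : interior (Ioo (0:ℝ) 1) = Ioo (0:ℝ) 1 := isOpen_Ioo.interior_eq
  apply antitoneOn_of_hasDerivWithinAt_nonpos (convex_Ioo 0 1)
    (f' := fun p => 2 * (Real.log p + 1 - p) * (Real.log p + (1 - p) / p) / (1 - p) ^ 3)
  · exact fun x hx => (hasDerivAt_fder hx.1 hx.2).continuousAt.continuousWithinAt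
  · rw [hint]
    exact fun x hx => (hasDerivAt_fder hx.1 hx.2).hasDerivWithinAt
  · rw [hint]
    rintro x ⟨hx0, hx1⟩
    apply div_nonpos_of_nonpos_of_nonneg
    · have h1 : Real.log x + 1 - x ≤ 0 := by
        have := Real.log_le_sub_one_of_pos hx0; linarith
      have h2 : 0 ≤ Real.log x + (1 - x) / x := by
        have := Real.one_sub_inv_le_log_of_pos hx0
        have hx : (1 - x) / x = x⁻¹ - 1 := by field_simp
        rw [hx]; linarith
      nlinarith
    · exact pow_nonneg (by linarith) 3

lemma fent_tangent {p q : ℝ} (hp : p ∈ Ioo (0:ℝ) 1) (hq : q ∈ Ioo (0:ℝ) 1) :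
    fent p ≤ fent q + fder q * (p - q) := by
  obtain ⟨hp0, hp1⟩ := hp
  obtain ⟨hq0, hq1⟩ := hq
  rcases lt_trichotomy p q with h | h | h
  · have hcont : ContinuousOn fent (Icc p q) := fun x hx =>
      (hasDerivAt_fent (lt_of_lt_of_le hp0 hx.1) (lt_of_le_of_lt hx.2 hq1)).continuousAt.continuousWithinAt
    obtain ⟨c, hc, hceq⟩ := exists_hasDerivAt_eq_slope fent fder h hcont
      (fun x hx => hasDerivAt_fent (hp0.trans hx.1) (hx.2.trans hq1))
    have hcq : fder q ≤ fder c :=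
      fder_anti ⟨hp0.trans hc.1, hc.2.trans hq1⟩ ⟨hq0, hq1⟩ hc.2.le
    rw [eq_div_iff (by linarith : q - p ≠ 0)] at hceq
    have hslope : fent q - fent p = fder c * (q - p) := by linarith
    nlinarith [mul_le_mul_of_nonneg_right hcq (by linarith : (0:ℝ) ≤ q - p)]
  · subst h; simp
  · have hcont : ContinuousOn fent (Icc q p) := fun x hx =>
      (hasDerivAt_fent (lt_of_lt_of_le hq0 hx.1) (lt_of_le_of_lt hx.2 hp1)).continuousAt.continuousWithinAt
    obtain ⟨c, hc, hceq⟩ := exists_hasDerivAt_eq_slope fent fder h hcont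
      (fun x hx => hasDerivAt_fent (hq0.trans hx.1) (hx.2.trans hp1))
    have hcq : fder c ≤ fder q :=
      fder_anti ⟨hq0, hq1⟩ ⟨hq0.trans hc.1, hc.2.trans hp1⟩ hc.1.le
    rw [eq_div_iff (by linarith : p - q ≠ 0)] at hceq
    have hslope : fent p - fent q = fder c * (p - q) := by linarith
    nlinarith [mul_le_mul_of_nonneg_right hcq (by linarith : (0:ℝ) ≤ p - q)]

lemma qfder_le_fent {q : ℝ} (h0 : 0 < q) (h1 : q < 1) : q * fder q ≤ fent q := by
  have hq1 : (0:ℝ) < 1 - q := by linarith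
  have hlog : -Real.log q ≤ q⁻¹ - 1 := by
    have := Real.one_sub_inv_le_log_of_pos h0; linarith
  have hmain : q * (-Real.log q) ≤ 1 - q := by
    have := mul_le_mul_of_nonneg_left hlog h0.le
    calc q * (-Real.log q) ≤ q * (q⁻¹ - 1) := this
      _ = 1 - q := by field_simp
  unfold fent fder
  rw [← mul_div_assoc, div_le_div_iff₀ (by positivity) hq1]
  have hlq : Real.log q ≤ 0 := Real.log_nonpos h0.le (by linarith)
  nlinarith [sq_nonneg (Real.log q), mul_nonneg (mul_nonneg h0.le (neg_nonneg.2 hlq)) hq1.le]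

lemma scalar_entropy_bound {ι : Type*} [Fintype ι] [DecidableEq ι] (n : ℕ) (hn : 2 ≤ n)
    (lam : ι → ℝ) (h0 : ∀ i, 0 ≤ lam i) (hsum : ∑ i, lam i = 1)
    (hcard : (Finset.univ.filter (fun i => lam i ≠ 0)).card ≤ n) :
    ∑ i, (-(lam i) * Real.log (lam i)) ≤
      Real.log n * Real.sqrt ((n : ℝ) / ((n : ℝ) - 1)) *
        Real.sqrt (1 - ∑ i, (lam i) ^ 2) := by
  have hn2 : (2:ℝ) ≤ (n:ℝ) := by exact_mod_cast hn
  have hle1 : ∀ i, lam i ≤ 1 := by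
    intro i
    calc lam i ≤ ∑ j, lam j := Finset.single_le_sum (fun j _ => h0 j) (Finset.mem_univ i)
      _ = 1 := hsum
  have ht1 : ∑ i, (lam i) ^ 2 ≤ 1 := by
    calc ∑ i, (lam i) ^ 2 ≤ ∑ i, lam i :=
          Finset.sum_le_sum (fun i _ => by nlinarith [h0 i, hle1 i])
      _ = 1 := hsum
  have hlogn : 0 ≤ Real.log n := Real.log_nonneg (by linarith)
  have hRHS0 : 0 ≤ Real.log n * Real.sqrt ((n : ℝ) / ((n : ℝ) - 1)) *
      Real.sqrt (1 - ∑ i, (lam i) ^ 2) := by positivity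
  by_cases hone : ∃ i, lam i = 1
  · obtain ⟨i, hi⟩ := hone
    have hz : ∀ j, j ≠ i → lam j = 0 := by
      intro j hj
      have hsum' : ∑ x ∈ Finset.univ.erase i, lam x = 0 := by
        have := Finset.sum_erase_add Finset.univ lam (Finset.mem_univ i)
        rw [hsum] at this; linarith [this, hi]
      exact (Finset.sum_eq_zero_iff_of_nonneg (fun j _ => h0 j)).1 hsum' j
        (Finset.mem_erase.2 ⟨hj, Finset.mem_univ j⟩)
    have : ∑ i, (-(lam i) * Real.log (lam i)) = 0 := by
      apply Finset.sum_eq_zero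
      intro j _
      by_cases hji : j = i
      · subst hji; rw [hi]; simp
      · rw [hz j hji]; simp
    rw [this]; exact hRHS0
  · push_neg at hone
    have hlt1 : ∀ i, lam i < 1 := fun i => lt_of_le_of_ne (hle1 i) (hone i)
    -- Cauchy-Schwarz
    have hCS : (∑ i, (-(lam i) * Real.log (lam i))) ^ 2 ≤
        (∑ i, lam i * (1 - lam i)) * (∑ i, fent (lam i)) := by
      apply Finset.sum_sq_le_sum_mul_sum_of_sq_eq_mul
      · exact fun i _ => mul_nonneg (h0 i) (by linarith [hlt1 i])
      · intro i _
        unfold fent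
        exact div_nonneg (mul_nonneg (h0 i) (sq_nonneg _)) (by linarith [hlt1 i])
      · intro i _
        unfold fent
        have h1i : (1:ℝ) - lam i ≠ 0 := by linarith [hlt1 i]
        field_simp
    have hsumf : ∑ i, lam i * (1 - lam i) = 1 - ∑ i, (lam i) ^ 2 := by
      have : ∀ i, lam i * (1 - lam i) = lam i - (lam i) ^ 2 := fun i => by ring
      simp_rw [this, Finset.sum_sub_distrib, hsum]
    -- bound the second factor
    set q : ℝ := (n : ℝ)⁻¹ with hq
    have hq0 : 0 < q := by positivity
    have hq1 : q < 1 := by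
      rw [hq]
      rw [inv_lt_one_iff₀]
      right; linarith
    set S := Finset.univ.filter (fun i => lam i ≠ 0) with hS
    have hsum_fent : ∑ i, fent (lam i) = ∑ i ∈ S, fent (lam i) := by
      symm
      apply Finset.sum_subset (Finset.subset_univ S)
      intro x _ hx
      simp only [hS, Finset.mem_filter, Finset.mem_univ, true_and, not_not] at hx
      unfold fent; rw [hx]; simp
    have hsum_lam : ∑ i ∈ S, lam i = 1 := by
      rw [← hsum]
      apply Finset.sum_subset (Finset.subset_univ S)
      intro x _ hx
      simp only [hS, Finset.mem_filter, Finset.mem_univ, true_and, not_not] at hx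
      exact hx
    have htang : ∑ i ∈ S, fent (lam i) ≤
        S.card * fent q + fder q * (1 - S.card * q) := by
      calc ∑ i ∈ S, fent (lam i) ≤ ∑ i ∈ S, (fent q + fder q * (lam i - q)) := by
            apply Finset.sum_le_sum
            intro i hi
            have hi0 : lam i ≠ 0 := by
              simp only [hS, Finset.mem_filter] at hi; exact hi.2
            exact fent_tangent ⟨lt_of_le_of_ne (h0 i) (Ne.symm hi0), hlt1 i⟩ ⟨hq0, hq1⟩
        _ = S.card * fent q + fder q * (1 - S.card * q) := by
            rw [Finset.sum_add_distrib, Finset.sum_const, ← Finset.mul_sum,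
              Finset.sum_sub_distrib, hsum_lam, Finset.sum_const, nsmul_eq_mul,
              nsmul_eq_mul]
    have hcardS : (S.card : ℝ) ≤ (n : ℝ) := by exact_mod_cast hcard
    have hfq0 : 0 ≤ fent q := by
      unfold fent
      exact div_nonneg (mul_nonneg hq0.le (sq_nonneg _)) (by linarith)
    have hkey : q * fder q ≤ fent q := qfder_le_fent hq0 hq1
    have hnq : (n : ℝ) * q = 1 := by
      rw [hq]; field_simp
    have hbound : ∑ i ∈ S, fent (lam i) ≤ (n : ℝ) * fent q := by
      have h1 : (S.card : ℝ) * fent q + fder q * (1 - S.card * q) ≤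
          (n : ℝ) * fent q + fder q * (1 - (n:ℝ) * q) := by
        nlinarith [mul_nonneg (sub_nonneg.2 hcardS) (sub_nonneg.2 hkey)]
      rw [hnq] at h1
      simp only [sub_self, mul_zero, add_zero] at h1
      exact htang.trans h1
    have hval : (n : ℝ) * fent q = Real.log n ^ 2 * ((n:ℝ) / ((n:ℝ) - 1)) := by
      unfold fent
      rw [hq, Real.log_inv]
      have h1 : (n:ℝ) ≠ 0 := by linarith
      have h2 : (n:ℝ) - 1 ≠ 0 := by linarith
      field_simp
    -- combine
    have hH0 : 0 ≤ ∑ i, (-(lam i) * Real.log (lam i)) := by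
      apply Finset.sum_nonneg
      intro i _
      have : Real.log (lam i) ≤ 0 := Real.log_nonpos (h0 i) (hle1 i)
      nlinarith [h0 i]
    have hsq : (∑ i, (-(lam i) * Real.log (lam i))) ^ 2 ≤
        (Real.log n * Real.sqrt ((n : ℝ) / ((n : ℝ) - 1)) *
          Real.sqrt (1 - ∑ i, (lam i) ^ 2)) ^ 2 := by
      have hnn1 : (0:ℝ) ≤ (n:ℝ) / ((n:ℝ) - 1) := by
        apply div_nonneg <;> linarith
      have hrhs_sq : (Real.log n * Real.sqrt ((n : ℝ) / ((n : ℝ) - 1)) *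
          Real.sqrt (1 - ∑ i, (lam i) ^ 2)) ^ 2 =
          Real.log n ^ 2 * ((n:ℝ) / ((n:ℝ) - 1)) * (1 - ∑ i, (lam i) ^ 2) := by
        rw [mul_pow, mul_pow, Real.sq_sqrt hnn1, Real.sq_sqrt (by linarith : 0 ≤ 1 - ∑ i, (lam i) ^ 2)]
      rw [hrhs_sq]
      calc (∑ i, (-(lam i) * Real.log (lam i))) ^ 2 ≤
            (∑ i, lam i * (1 - lam i)) * (∑ i, fent (lam i)) := hCS
        _ = (1 - ∑ i, (lam i) ^ 2) * (∑ i ∈ S, fent (lam i)) := by rw [hsumf, hsum_fent]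
        _ ≤ (1 - ∑ i, (lam i) ^ 2) * ((n : ℝ) * fent q) := by
            apply mul_le_mul_of_nonneg_left (hbound) (by linarith)
        _ = Real.log n ^ 2 * ((n:ℝ) / ((n:ℝ) - 1)) * (1 - ∑ i, (lam i) ^ 2) := by
            rw [hval]; ring
    calc ∑ i, (-(lam i) * Real.log (lam i)) =
          Real.sqrt ((∑ i, (-(lam i) * Real.log (lam i))) ^ 2) := (Real.sqrt_sq hH0).symm
      _ ≤ Real.sqrt ((Real.log n * Real.sqrt ((n : ℝ) / ((n : ℝ) - 1)) *
            Real.sqrt (1 - ∑ i, (lam i) ^ 2)) ^ 2) := Real.sqrt_le_sqrt hsq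
      _ = _ := Real.sqrt_sq hRHS0

lemma unit_star_mul_self {M : ℕ} {σ : Matrix (Fin M) (Fin M) ℂ} (h : σ.IsHermitian) :
    (star (h.eigenvectorUnitary : Matrix (Fin M) (Fin M) ℂ)) *
      (h.eigenvectorUnitary : Matrix (Fin M) (Fin M) ℂ) = 1 := by
  exact Unitary.coe_star_mul_self h.eigenvectorUnitary

lemma trace_eq_sum_eig {M : ℕ} {σ : Matrix (Fin M) (Fin M) ℂ} (h : σ.IsHermitian) :
    σ.trace = ∑ i, (h.eigenvalues i : ℂ) := by
  conv_lhs => rw [h.spectral_theorem]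
  rw [Unitary.conjStarAlgAut_apply, Matrix.trace_mul_cycle, unit_star_mul_self h, Matrix.one_mul, Matrix.trace_diagonal]
  rfl

lemma trace_sq_eq_sum_eig {M : ℕ} {σ : Matrix (Fin M) (Fin M) ℂ} (h : σ.IsHermitian) :
    (σ * σ).trace = ∑ i, ((h.eigenvalues i : ℂ)) ^ 2 := by
  set U : Matrix (Fin M) (Fin M) ℂ := (h.eigenvectorUnitary : Matrix (Fin M) (Fin M) ℂ) with hU
  set D : Matrix (Fin M) (Fin M) ℂ := Matrix.diagonal (RCLike.ofReal ∘ h.eigenvalues) with hD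
  have hσ : σ = U * D * star U := h.spectral_theorem
  have hsq : σ * σ = U * (D * D) * star U := by
    rw [hσ]
    simp only [Matrix.mul_assoc]
    rw [← Matrix.mul_assoc (star U) U, unit_star_mul_self h, Matrix.one_mul]
  rw [hsq, Matrix.trace_mul_cycle, unit_star_mul_self h, Matrix.one_mul,
    hD, Matrix.diagonal_mul_diagonal, Matrix.trace_diagonal]
  apply Finset.sum_congr rfl
  intro i _
  simp [sq]

lemma re_sum_eig {M : ℕ} {σ : Matrix (Fin M) (Fin M) ℂ} (h : σ.IsHermitian)
    (htr : σ.trace = 1) : ∑ i, h.eigenvalues i = 1 := by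
  calc ∑ i, h.eigenvalues i = (∑ i, (h.eigenvalues i : ℂ)).re := by
        rw [Complex.re_sum]; simp
    _ = σ.trace.re := by rw [← trace_eq_sum_eig h]
    _ = 1 := by rw [htr]; simp

lemma re_trace_sq {M : ℕ} {σ : Matrix (Fin M) (Fin M) ℂ} (h : σ.IsHermitian) :
    (σ * σ).trace.re = ∑ i, (h.eigenvalues i) ^ 2 := by
  rw [trace_sq_eq_sum_eig h, Complex.re_sum]
  apply Finset.sum_congr rfl
  intro i _
  simp [← Complex.ofReal_pow]

lemma pure_posSemidef {N : ℕ} (ψ : Fin N → ℂ) :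
    (Matrix.vecMulVec ψ (star ψ)).PosSemidef := by
  rw [Matrix.vecMulVec_eq Unit ψ (star ψ), ← Matrix.conjTranspose_replicateCol]
  exact Matrix.posSemidef_self_mul_conjTranspose _

lemma pure_trace {N : ℕ} (ψ : Fin N → ℂ) (hψ : ∑ i, Complex.normSq (ψ i) = 1) :
    (Matrix.vecMulVec ψ (star ψ)).trace = 1 := by
  unfold Matrix.trace
  have : ∀ i, (Matrix.vecMulVec ψ (star ψ)).diag i = (Complex.normSq (ψ i) : ℂ) := by
    intro i
    simp [Matrix.diag, Matrix.vecMulVec_apply, Pi.star_apply, Complex.star_def,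
      Complex.mul_conj]
  rw [Finset.sum_congr rfl (fun i _ => this i), ← Complex.ofReal_sum, hψ]
  simp

lemma vnEntropy_nonneg {M : ℕ} (σ : Matrix (Fin M) (Fin M) ℂ)
    (hσ : σ.PosSemidef) (htr : σ.trace = 1) : 0 ≤ vnEntropy σ := by
  rw [vnEntropy, dif_pos hσ.1]
  have hsum := re_sum_eig hσ.1 htr
  have h0 : ∀ i, 0 ≤ hσ.1.eigenvalues i := hσ.eigenvalues_nonneg
  have hle1 : ∀ i, hσ.1.eigenvalues i ≤ 1 := by
    intro i
    calc hσ.1.eigenvalues i ≤ ∑ j, hσ.1.eigenvalues j :=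
          Finset.single_le_sum (fun j _ => h0 j) (Finset.mem_univ i)
      _ = 1 := hsum
  apply Finset.sum_nonneg
  intro i _
  have : Real.log (hσ.1.eigenvalues i) ≤ 0 := Real.log_nonpos (h0 i) (hle1 i)
  nlinarith [h0 i]

lemma matrix_entropy_bound {M n : ℕ} (hn : 2 ≤ n) (σ : Matrix (Fin M) (Fin M) ℂ)
    (hσ : σ.PosSemidef) (htr : σ.trace = 1) (hr : σ.rank ≤ n) :
    vnEntropy σ ≤ Real.log n * Real.sqrt ((n : ℝ) / ((n : ℝ) - 1)) *
      Real.sqrt (1 - (σ * σ).trace.re) := by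
  rw [vnEntropy, dif_pos hσ.1, re_trace_sq hσ.1]
  apply scalar_entropy_bound n hn _ hσ.eigenvalues_nonneg (re_sum_eig hσ.1 htr)
  rw [← Fintype.card_subtype]
  rw [hσ.1.rank_eq_card_non_zero_eigs] at hr
  exact hr

theorem min_output_entropy_bound (N M n : ℕ) (hn : 2 ≤ n)
    (Φ : Matrix (Fin N) (Fin N) ℂ →ₗ[ℂ] Matrix (Fin M) (Fin M) ℂ)
    (htp : ∀ ρ, (Φ ρ).trace = ρ.trace)
    (hpos : ∀ ρ, ρ.PosSemidef → (Φ ρ).PosSemidef)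
    (hrank : ∀ ψ : Fin N → ℂ, ∑ i, Complex.normSq (ψ i) = 1 →
      (Φ (Matrix.vecMulVec ψ (star ψ))).rank ≤ n)
    (ψ : Fin N → ℂ) (hψ : ∑ i, Complex.normSq (ψ i) = 1) :
    sInf {s : ℝ | ∃ ρ : Matrix (Fin N) (Fin N) ℂ,
        ρ.PosSemidef ∧ ρ.trace = 1 ∧ s = vnEntropy (Φ ρ)} ≤
      Real.log n * Real.sqrt (n / (n - 1)) *
        Real.sqrt (1 - ((Φ (Matrix.vecMulVec ψ (star ψ))) *
          (Φ (Matrix.vecMulVec ψ (star ψ)))).trace.re) := by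
  set ρ := Matrix.vecMulVec ψ (star ψ) with hρ
  have hρPSD : ρ.PosSemidef := pure_posSemidef ψ
  have hρtr : ρ.trace = 1 := pure_trace ψ hψ
  have hσPSD : (Φ ρ).PosSemidef := hpos ρ hρPSD
  have hσtr : (Φ ρ).trace = 1 := by rw [htp ρ, hρtr]
  have hmem : vnEntropy (Φ ρ) ∈ {s : ℝ | ∃ ρ : Matrix (Fin N) (Fin N) ℂ,
      ρ.PosSemidef ∧ ρ.trace = 1 ∧ s = vnEntropy (Φ ρ)} := ⟨ρ, hρPSD, hρtr, rfl⟩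
  have hbdd : BddBelow {s : ℝ | ∃ ρ : Matrix (Fin N) (Fin N) ℂ,
      ρ.PosSemidef ∧ ρ.trace = 1 ∧ s = vnEntropy (Φ ρ)} := by
    refine ⟨0, ?_⟩
    rintro s ⟨ρ', hPSD', htr', rfl⟩
    exact vnEntropy_nonneg _ (hpos ρ' hPSD') (by rw [htp ρ', htr'])
  refine le_trans (csInf_le hbdd hmem) ?_
  exact matrix_entropy_bound hn (Φ ρ) hσPSD hσtr (hrank ψ hψ)

end Aux
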